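/- Let Λ < π² be a real number and let f : [0,1] → ℝ be continuous on [0,1], twice continuously differentiable on (0,1), and nonnegative, and assume f''(t) + Λ f(t) ≥ 0 for every t ∈ (0,1). Then for all t, s₀, s₁ ∈ [0,1], f((1−t)s₀ + t s₁) ≤ σ_Λ^{(1−t)}(|s₀−s₁|) f(s₀) + σ_Λ^{(t)}(|s₀−s₁|) f(s₁). -/

import Mathlib

set_option maxHeartbeats 1000000

open Set Filter


lemma aux_secondDeriv_nonpos_of_isLocalMax
    (v v' v'' : ℝ → ℝ) (t₀ : ℝ) (ht₀ : t₀ ∈ Set.Ioo (0:ℝ) 1)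
    (hv : ∀ t ∈ Set.Ioo (0:ℝ) 1, HasDerivAt v (v' t) t)
    (hv' : ∀ t ∈ Set.Ioo (0:ℝ) 1, HasDerivAt v' (v'' t) t)
    (hv'' : ContinuousOn v'' (Set.Ioo 0 1))
    (hmax : IsLocalMax v t₀) : v'' t₀ ≤ 0 := by
  by_contra hpos
  push_neg at hpos
  have hd0 : v' t₀ = 0 := by
    have h := hmax.deriv_eq_zero
    rwa [(hv t₀ ht₀).deriv] at h
  have hca : ContinuousAt v'' t₀ :=
    (hv''.continuousAt (isOpen_Ioo.mem_nhds ht₀))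
  have hev : ∀ᶠ t in nhds t₀, 0 < v'' t ∧ t ∈ Set.Ioo (0:ℝ) 1 ∧ v t ≤ v t₀ :=
    (hca.eventually (eventually_gt_nhds hpos)).and
      ((isOpen_Ioo.eventually_mem ht₀).and hmax)
  obtain ⟨δ, hδ, hball⟩ := Metric.eventually_nhds_iff.mp hev
  set b := t₀ + δ/2 with hb
  have hIb : ∀ t ∈ Set.Icc t₀ b, 0 < v'' t ∧ t ∈ Set.Ioo (0:ℝ) 1 ∧ v t ≤ v t₀ := by
    intro t ht
    apply hball
    have h1 : t₀ ≤ t := ht.1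
    have h2 : t ≤ t₀ + δ/2 := ht.2
    rw [Real.dist_eq, abs_lt]
    constructor <;> linarith
  -- v' is strictly monotone on [t₀, b]
  have hmono' : StrictMonoOn v' (Set.Icc t₀ b) := by
    apply strictMonoOn_of_deriv_pos (convex_Icc _ _)
    · intro t ht
      exact ((hv' t (hIb t ht).2.1).continuousAt).continuousWithinAt
    · intro t ht
      rw [interior_Icc] at ht
      have ht' : t ∈ Set.Icc t₀ b := ⟨ht.1.le, ht.2.le⟩
      rw [(hv' t (hIb t ht').2.1).deriv]
      exact (hIb t ht').1
  have hb0 : t₀ < b := by simp [hb]; linarith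
  have hv'pos : ∀ t ∈ Set.Ioo t₀ b, 0 < v' t := by
    intro t ht
    have := hmono' (Set.left_mem_Icc.mpr hb0.le) ⟨ht.1.le, ht.2.le⟩ ht.1
    rwa [hd0] at this
  have hmono : StrictMonoOn v (Set.Icc t₀ b) := by
    apply strictMonoOn_of_deriv_pos (convex_Icc _ _)
    · intro t ht
      exact ((hv t (hIb t ht).2.1).continuousAt).continuousWithinAt
    · intro t ht
      rw [interior_Icc] at ht
      rw [(hv t (hIb t ⟨ht.1.le, ht.2.le⟩).2.1).deriv]
      exact hv'pos t ht
  have h1 : v t₀ < v b := hmono (Set.left_mem_Icc.mpr hb0.le) (Set.right_mem_Icc.mpr hb0.le) hb0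
  have h2 : v b ≤ v t₀ := (hIb b (Set.right_mem_Icc.mpr hb0.le)).2.2
  linarith

lemma aux_max_principle (μ : ℝ) (hμ : μ < Real.pi ^ 2) (w w' w'' : ℝ → ℝ)
    (hw : ContinuousOn w (Set.Icc 0 1))
    (hd : ∀ t ∈ Set.Ioo (0:ℝ) 1, HasDerivAt w (w' t) t)
    (hd' : ∀ t ∈ Set.Ioo (0:ℝ) 1, HasDerivAt w' (w'' t) t)
    (hcont : ContinuousOn w'' (Set.Ioo 0 1))
    (hineq : ∀ t ∈ Set.Ioo (0:ℝ) 1, 0 ≤ w'' t + μ * w t)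
    (h0 : w 0 ≤ 0) (h1 : w 1 ≤ 0) :
    ∀ t ∈ Set.Icc (0:ℝ) 1, w t ≤ 0 := by
  have hπ : (0:ℝ) < Real.pi := Real.pi_pos
  set l : ℝ := (max μ 0 + Real.pi ^ 2) / 2 with hl
  have hl0 : 0 < l := by
    have : (0:ℝ) ≤ max μ 0 := le_max_right _ _
    positivity
  have hlμ : μ < l := by
    have h1 : μ ≤ max μ 0 := le_max_left _ _
    have h2 : max μ 0 < Real.pi ^ 2 := max_lt hμ (by positivity)
    rw [hl]; linarith
  have hlπ : l < Real.pi ^ 2 := by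
    have h2 : max μ 0 < Real.pi ^ 2 := max_lt hμ (by positivity)
    rw [hl]; linarith
  set r : ℝ := Real.sqrt l with hr
  have hr0 : 0 < r := Real.sqrt_pos.mpr hl0
  have hr2 : r ^ 2 = l := Real.sq_sqrt hl0.le
  have hrπ : r < Real.pi := by
    have := Real.sqrt_lt_sqrt (by positivity) hlπ
    rwa [Real.sqrt_sq hπ.le] at this
  set φ : ℝ → ℝ := fun t => Real.cos (r * (t - 1/2)) with hφ
  have hφpos : ∀ t ∈ Set.Icc (0:ℝ) 1, 0 < φ t := by
    intro t ht
    apply Real.cos_pos_of_mem_Ioo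
    constructor
    · nlinarith [ht.1, ht.2]
    · nlinarith [ht.1, ht.2]
  have hφd : ∀ t : ℝ, HasDerivAt φ (-Real.sin (r * (t - 1/2)) * r) t := by
    intro t
    have h1 : HasDerivAt (fun t : ℝ => r * (t - 1/2)) r t := by
      have h0 := ((hasDerivAt_id t).sub_const (1/2)).const_mul r
      simp only [mul_one] at h0
      exact h0
    exact h1.cos
  have hφd' : ∀ t : ℝ, HasDerivAt (fun t => -Real.sin (r * (t - 1/2)) * r)
      (-(r * r) * φ t) t := by
    intro t
    have h1 : HasDerivAt (fun t : ℝ => r * (t - 1/2)) r t := by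
      have h0 := ((hasDerivAt_id t).sub_const (1/2)).const_mul r
      simp only [mul_one] at h0
      exact h0
    have h2 := (h1.sin.neg).mul_const r
    have e : -(r * r) * φ t = -(Real.cos (r * (t - 1/2)) * r) * r := by simp only [hφ]; ring
    rw [e]; exact h2
  have hφc : ContinuousOn φ (Set.Icc 0 1) := fun t _ => (hφd t).continuousAt.continuousWithinAt
  set q : ℝ → ℝ := fun t => w t / φ t with hq
  have hqc : ContinuousOn q (Set.Icc 0 1) :=
    hw.div hφc (fun t ht => (hφpos t ht).ne')
  obtain ⟨t₀, ht₀, hmax⟩ := isCompact_Icc.exists_isMaxOn (by norm_num) hqc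
  set M : ℝ := q t₀ with hM
  by_cases hMpos : M ≤ 0
  · intro t ht
    have h1 : q t ≤ M := hmax ht
    have h2 : w t = q t * φ t := (div_mul_cancel₀ _ (hφpos t ht).ne').symm
    rw [h2]
    exact mul_nonpos_of_nonpos_of_nonneg (h1.trans hMpos) (hφpos t ht).le
  · exfalso
    push_neg at hMpos
    have hq0 : q 0 ≤ 0 := div_nonpos_of_nonpos_of_nonneg h0 (hφpos 0 (by norm_num)).le
    have hq1 : q 1 ≤ 0 := div_nonpos_of_nonpos_of_nonneg h1 (hφpos 1 (by norm_num)).le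
    have ht₀i : t₀ ∈ Set.Ioo (0:ℝ) 1 := by
      rcases eq_or_lt_of_le ht₀.1 with h | h
      · exfalso
        have hqt : q t₀ ≤ 0 := by rw [← h]; exact hq0
        rw [hM] at hMpos; linarith
      rcases eq_or_lt_of_le ht₀.2 with h' | h'
      · exfalso
        have hqt : q t₀ ≤ 0 := by rw [h']; exact hq1
        rw [hM] at hMpos; linarith
      exact ⟨h, h'⟩
    set v : ℝ → ℝ := fun t => w t - M * φ t with hv
    have hwt₀ : w t₀ = M * φ t₀ := by
      rw [hM, hq]
      exact (div_mul_cancel₀ _ (hφpos t₀ ht₀).ne').symm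
    have hvle : ∀ t ∈ Set.Icc (0:ℝ) 1, v t ≤ 0 := by
      intro t ht
      have h1 : q t ≤ M := hmax ht
      have h2 : w t ≤ M * φ t := (div_le_iff₀ (hφpos t ht)).mp h1
      simp [hv]; linarith
    have hvt₀ : v t₀ = 0 := by simp [hv, hwt₀]
    have hlocmax : IsLocalMax v t₀ := by
      have : ∀ᶠ t in nhds t₀, t ∈ Set.Icc (0:ℝ) 1 :=
        eventually_of_mem (isOpen_Ioo.mem_nhds ht₀i) (fun t ht => Set.Ioo_subset_Icc_self ht)
      filter_upwards [this] with t ht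
      rw [hvt₀]
      exact hvle t ht
    have hsecond := aux_secondDeriv_nonpos_of_isLocalMax v
      (fun t => w' t - M * (-Real.sin (r * (t - 1/2)) * r))
      (fun t => w'' t - M * (-(r * r) * φ t)) t₀ ht₀i
      (fun t ht => (hd t ht).sub ((hφd t).const_mul M))
      (fun t ht => (hd' t ht).sub ((hφd' t).const_mul M))
      (by
        apply hcont.sub
        apply Continuous.continuousOn
        fun_prop)
      hlocmax
    have hode := hineq t₀ ht₀i
    have hφt₀ : 0 < φ t₀ := hφpos t₀ ht₀
    have h2 : w'' t₀ - M * (-(r * r) * φ t₀) ≤ 0 := hsecond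
    have hrr : r * r = l := by rw [← hr2]; ring
    rw [hwt₀] at hode
    have hc : 0 < M * φ t₀ * (l - μ) := mul_pos (mul_pos hMpos hφt₀) (sub_pos.mpr hlμ)
    nlinarith [hc, h2, hode, hrr]

lemma aux_compare (μ : ℝ) (hμ : μ < Real.pi ^ 2) (g g' g'' h h' h'' : ℝ → ℝ)
    (hgc : ContinuousOn g (Set.Icc 0 1))
    (hgd : ∀ u ∈ Set.Ioo (0:ℝ) 1, HasDerivAt g (g' u) u)
    (hgd' : ∀ u ∈ Set.Ioo (0:ℝ) 1, HasDerivAt g' (g'' u) u)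
    (hgcont : ContinuousOn g'' (Set.Ioo 0 1))
    (hgode : ∀ u ∈ Set.Ioo (0:ℝ) 1, 0 ≤ g'' u + μ * g u)
    (hh : ∀ u : ℝ, HasDerivAt h (h' u) u)
    (hh' : ∀ u : ℝ, HasDerivAt h' (h'' u) u)
    (hhc : Continuous h'')
    (hhode : ∀ u : ℝ, h'' u + μ * h u = 0)
    (h0 : g 0 ≤ h 0) (h1 : g 1 ≤ h 1) :
    ∀ t ∈ Set.Icc (0:ℝ) 1, g t ≤ h t := by
  intro t ht
  have hres := aux_max_principle μ hμ (fun u => g u - h u) (fun u => g' u - h' u)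
    (fun u => g'' u - h'' u)
    (hgc.sub (fun u _ => (hh u).continuousAt.continuousWithinAt))
    (fun u hu => (hgd u hu).sub (hh u))
    (fun u hu => (hgd' u hu).sub (hh' u))
    (hgcont.sub hhc.continuousOn)
    (fun u hu => by
      have h1 := hgode u hu
      have h2 := hhode u
      beta_reduce
      linarith)
    (by beta_reduce; linarith) (by beta_reduce; linarith) t ht
  beta_reduce at hres
  linarith


/-- Distortion coefficient `σ_Λ^{(t)}(θ)`. -/
noncomputable def sigmaCoeff (Λ t θ : ℝ) : ℝ :=
  if Λ * θ ^ 2 = 0 then t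
  else if 0 < Λ * θ ^ 2 then
    Real.sin (t * (θ * Real.sqrt Λ)) / Real.sin (θ * Real.sqrt Λ)
  else
    Real.sinh (t * (θ * Real.sqrt (-Λ))) / Real.sinh (θ * Real.sqrt (-Λ))

lemma aux_key (Λ : ℝ) (hΛ : Λ < Real.pi ^ 2)
    (f f' f'' : ℝ → ℝ)
    (hf : ContinuousOn f (Set.Icc 0 1))
    (hf' : ∀ t ∈ Set.Ioo (0 : ℝ) 1, HasDerivAt f (f' t) t)
    (hf'' : ∀ t ∈ Set.Ioo (0 : ℝ) 1, HasDerivAt f' (f'' t) t)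
    (hf''cont : ContinuousOn f'' (Set.Ioo 0 1))
    (hode : ∀ t ∈ Set.Ioo (0 : ℝ) 1, 0 ≤ f'' t + Λ * f t)
    (t : ℝ) (ht : t ∈ Set.Icc (0:ℝ) 1) (s₀ : ℝ) (hs₀ : s₀ ∈ Set.Icc (0:ℝ) 1)
    (s₁ : ℝ) (hs₁ : s₁ ∈ Set.Icc (0:ℝ) 1) (hlt : s₀ < s₁) :
    f ((1 - t) * s₀ + t * s₁) ≤
      sigmaCoeff Λ (1 - t) |s₀ - s₁| * f s₀ + sigmaCoeff Λ t |s₀ - s₁| * f s₁ := by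
  obtain ⟨hs₀0, hs₀1⟩ := hs₀
  obtain ⟨hs₁0, hs₁1⟩ := hs₁
  obtain ⟨ht0, ht1⟩ := ht
  set θ : ℝ := s₁ - s₀ with hθ
  have hθ0 : 0 < θ := by rw [hθ]; linarith
  have hθ1 : θ ≤ 1 := by rw [hθ]; linarith
  have habs : |s₀ - s₁| = θ := by rw [abs_sub_comm, abs_of_pos hθ0]
  have harg : (1 - t) * s₀ + t * s₁ = s₀ + t * θ := by rw [hθ]; ring
  -- the affine map
  have haff : ∀ u : ℝ, HasDerivAt (fun u : ℝ => s₀ + u * θ) θ u := by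
    intro u
    simpa using ((hasDerivAt_id u).mul_const θ).const_add s₀
  have haffc : Continuous (fun u : ℝ => s₀ + u * θ) := by fun_prop
  have hmem : Set.MapsTo (fun u : ℝ => s₀ + u * θ) (Set.Icc 0 1) (Set.Icc 0 1) := by
    intro u hu
    obtain ⟨hu0, hu1⟩ := hu
    constructor
    · simp only []; nlinarith
    · simp only []; nlinarith
  have hmemo : ∀ u ∈ Set.Ioo (0:ℝ) 1, s₀ + u * θ ∈ Set.Ioo (0:ℝ) 1 := by
    intro u hu
    obtain ⟨hu0, hu1⟩ := hu
    constructor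
    · nlinarith
    · nlinarith
  -- g and its derivatives
  have hgc : ContinuousOn (fun u => f (s₀ + u * θ)) (Set.Icc 0 1) :=
    hf.comp haffc.continuousOn hmem
  have hgd : ∀ u ∈ Set.Ioo (0:ℝ) 1,
      HasDerivAt (fun u => f (s₀ + u * θ)) (f' (s₀ + u * θ) * θ) u := by
    intro u hu
    exact (hf' _ (hmemo u hu)).comp u (haff u)
  have hgd' : ∀ u ∈ Set.Ioo (0:ℝ) 1,
      HasDerivAt (fun u => f' (s₀ + u * θ) * θ) (f'' (s₀ + u * θ) * θ * θ) u := by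
    intro u hu
    exact ((hf'' _ (hmemo u hu)).comp u (haff u)).mul_const θ
  have hgcont : ContinuousOn (fun u => f'' (s₀ + u * θ) * θ * θ) (Set.Ioo 0 1) := by
    apply ContinuousOn.mul _ continuousOn_const
    apply ContinuousOn.mul _ continuousOn_const
    exact hf''cont.comp haffc.continuousOn hmemo
  have hgode : ∀ u ∈ Set.Ioo (0:ℝ) 1,
      0 ≤ f'' (s₀ + u * θ) * θ * θ + (Λ * θ ^ 2) * f (s₀ + u * θ) := by
    intro u hu
    have h1 := hode _ (hmemo u hu)
    nlinarith [mul_nonneg h1 (sq_nonneg θ)]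
  set μ : ℝ := Λ * θ ^ 2 with hμdef
  rcases lt_trichotomy Λ 0 with hΛneg | hΛ0 | hΛpos
  · -- Λ < 0 : sinh case
    set c : ℝ := θ * Real.sqrt (-Λ) with hc
    have hc0 : 0 < c := mul_pos hθ0 (Real.sqrt_pos.mpr (by linarith))
    have hc2 : c ^ 2 = -μ := by
      rw [hc, mul_pow, Real.sq_sqrt (by linarith : (0:ℝ) ≤ -Λ), hμdef]; ring
    have hsinh : 0 < Real.sinh c := Real.sinh_pos_iff.mpr hc0
    have hμπ : μ < Real.pi ^ 2 := by nlinarith [Real.pi_pos, sq_nonneg θ]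
    have hi1 : ∀ u : ℝ, HasDerivAt (fun u : ℝ => (1 - u) * c) (-c) u := by
      intro u
      simpa using ((hasDerivAt_id u).const_sub 1).mul_const c
    have hi2 : ∀ u : ℝ, HasDerivAt (fun u : ℝ => u * c) c u := by
      intro u
      simpa using (hasDerivAt_id u).mul_const c
    have hh : ∀ u : ℝ, HasDerivAt
        (fun u => f s₀ * (Real.sinh ((1 - u) * c) / Real.sinh c)
          + f s₁ * (Real.sinh (u * c) / Real.sinh c))
        (f s₀ * (Real.cosh ((1 - u) * c) * -c / Real.sinh c)
          + f s₁ * (Real.cosh (u * c) * c / Real.sinh c)) u := by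
      intro u
      exact ((((hi1 u).sinh).div_const _).const_mul _).add
        ((((hi2 u).sinh).div_const _).const_mul _)
    have hh' : ∀ u : ℝ, HasDerivAt
        (fun u => f s₀ * (Real.cosh ((1 - u) * c) * -c / Real.sinh c)
          + f s₁ * (Real.cosh (u * c) * c / Real.sinh c))
        (f s₀ * (Real.sinh ((1 - u) * c) * -c * -c / Real.sinh c)
          + f s₁ * (Real.sinh (u * c) * c * c / Real.sinh c)) u := by
      intro u
      exact (((((hi1 u).cosh).mul_const _).div_const _).const_mul _).add
        (((((hi2 u).cosh).mul_const _).div_const _).const_mul _)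
    have hhode : ∀ u : ℝ,
        (f s₀ * (Real.sinh ((1 - u) * c) * -c * -c / Real.sinh c)
          + f s₁ * (Real.sinh (u * c) * c * c / Real.sinh c))
        + μ * (f s₀ * (Real.sinh ((1 - u) * c) / Real.sinh c)
          + f s₁ * (Real.sinh (u * c) / Real.sinh c)) = 0 := by
      intro u
      have : μ = -c^2 := by rw [hc2]; ring
      rw [this]
      field_simp
      ring
    have hhc : Continuous (fun u : ℝ =>
        f s₀ * (Real.sinh ((1 - u) * c) * -c * -c / Real.sinh c)
          + f s₁ * (Real.sinh (u * c) * c * c / Real.sinh c)) := by fun_prop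
    have hcmp := aux_compare μ hμπ _ _ _ _ _ _ hgc hgd hgd' hgcont hgode hh hh' hhc hhode
      (by
        simp only [zero_mul, add_zero, one_mul, sub_zero, Real.sinh_zero, zero_div, mul_zero]
        rw [div_self hsinh.ne']
        ring_nf
        exact le_refl _)
      (by
        simp only [one_mul, sub_self, Real.sinh_zero, zero_div, mul_zero, zero_mul]
        rw [div_self hsinh.ne']
        ring_nf
        simp [hθ])
      t ⟨ht0, ht1⟩
    rw [harg, habs]
    have hne : ¬ (Λ * θ ^ 2 = 0) := by nlinarith
    have hnpos : ¬ (0 < Λ * θ ^ 2) := by nlinarith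
    simp only [sigmaCoeff, if_neg hne, if_pos, hnpos, if_false]
    calc f (s₀ + t * θ) ≤ _ := hcmp
    _ = _ := by rw [hc]; ring
  · -- Λ = 0 : linear case
    have hμ0 : μ = 0 := by rw [hμdef, hΛ0]; ring
    have hμπ : μ < Real.pi ^ 2 := by rw [hμ0]; positivity
    have hh : ∀ u : ℝ, HasDerivAt (fun u : ℝ => f s₀ * (1 - u) + f s₁ * u)
        (f s₀ * -1 + f s₁ * 1) u := by
      intro u
      exact (((hasDerivAt_id u).const_sub 1).const_mul _).add ((hasDerivAt_id u).const_mul _)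
    have hh' : ∀ u : ℝ, HasDerivAt (fun _ : ℝ => f s₀ * -1 + f s₁ * 1) 0 u :=
      fun u => hasDerivAt_const u _
    have hhode : ∀ u : ℝ, (0:ℝ) + μ * (f s₀ * (1 - u) + f s₁ * u) = 0 := by
      intro u; rw [hμ0]; ring
    have hcmp := aux_compare μ hμπ _ _ _ _ _ (fun _ => (0:ℝ)) hgc hgd hgd' hgcont hgode
      hh hh' continuous_const hhode
      (by norm_num) (by
        have he : s₀ + 1 * θ = s₁ := by rw [hθ]; ring
        show f (s₀ + 1 * θ) ≤ f s₀ * (1 - 1) + f s₁ * 1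
        rw [he]; norm_num) t ⟨ht0, ht1⟩
    rw [harg, habs]
    have hzero : Λ * θ ^ 2 = 0 := by rw [hΛ0]; ring
    simp only [sigmaCoeff, if_pos hzero]
    calc f (s₀ + t * θ) ≤ _ := hcmp
    _ = _ := by ring
  · -- Λ > 0 : sin case
    set c : ℝ := θ * Real.sqrt Λ with hc
    have hc0 : 0 < c := mul_pos hθ0 (Real.sqrt_pos.mpr hΛpos)
    have hc2 : c ^ 2 = μ := by
      rw [hc, mul_pow, Real.sq_sqrt hΛpos.le, hμdef]; ring
    have hμπ : μ < Real.pi ^ 2 := by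
      rw [hμdef]
      nlinarith [mul_nonneg hΛpos.le (mul_nonneg (sub_nonneg.mpr hθ1)
        (by linarith : (0:ℝ) ≤ 1 + θ))]
    have hcπ : c < Real.pi := by
      have h1 : c ^ 2 < Real.pi ^ 2 := by rw [hc2]; exact hμπ
      nlinarith [Real.pi_pos, hc0]
    have hsin : 0 < Real.sin c := Real.sin_pos_of_pos_of_lt_pi hc0 hcπ
    have hi1 : ∀ u : ℝ, HasDerivAt (fun u : ℝ => (1 - u) * c) (-c) u := by
      intro u
      simpa using ((hasDerivAt_id u).const_sub 1).mul_const c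
    have hi2 : ∀ u : ℝ, HasDerivAt (fun u : ℝ => u * c) c u := by
      intro u
      simpa using (hasDerivAt_id u).mul_const c
    have hh : ∀ u : ℝ, HasDerivAt
        (fun u => f s₀ * (Real.sin ((1 - u) * c) / Real.sin c)
          + f s₁ * (Real.sin (u * c) / Real.sin c))
        (f s₀ * (Real.cos ((1 - u) * c) * -c / Real.sin c)
          + f s₁ * (Real.cos (u * c) * c / Real.sin c)) u := by
      intro u
      exact ((((hi1 u).sin).div_const _).const_mul _).add
        ((((hi2 u).sin).div_const _).const_mul _)
    have hh' : ∀ u : ℝ, HasDerivAt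
        (fun u => f s₀ * (Real.cos ((1 - u) * c) * -c / Real.sin c)
          + f s₁ * (Real.cos (u * c) * c / Real.sin c))
        (f s₀ * (-Real.sin ((1 - u) * c) * -c * -c / Real.sin c)
          + f s₁ * (-Real.sin (u * c) * c * c / Real.sin c)) u := by
      intro u
      exact (((((hi1 u).cos).mul_const _).div_const _).const_mul _).add
        (((((hi2 u).cos).mul_const _).div_const _).const_mul _)
    have hhode : ∀ u : ℝ,
        (f s₀ * (-Real.sin ((1 - u) * c) * -c * -c / Real.sin c)
          + f s₁ * (-Real.sin (u * c) * c * c / Real.sin c))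
        + μ * (f s₀ * (Real.sin ((1 - u) * c) / Real.sin c)
          + f s₁ * (Real.sin (u * c) / Real.sin c)) = 0 := by
      intro u
      rw [← hc2]
      field_simp
      ring
    have hhc : Continuous (fun u : ℝ =>
        f s₀ * (-Real.sin ((1 - u) * c) * -c * -c / Real.sin c)
          + f s₁ * (-Real.sin (u * c) * c * c / Real.sin c)) := by fun_prop
    have hcmp := aux_compare μ hμπ _ _ _ _ _ _ hgc hgd hgd' hgcont hgode hh hh' hhc hhode
      (by
        simp only [zero_mul, add_zero, one_mul, sub_zero, Real.sin_zero, zero_div, mul_zero]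
        rw [div_self hsin.ne']
        ring_nf
        exact le_refl _)
      (by
        simp only [one_mul, sub_self, Real.sin_zero, zero_div, mul_zero, zero_mul]
        rw [div_self hsin.ne']
        ring_nf
        simp [hθ])
      t ⟨ht0, ht1⟩
    rw [harg, habs]
    have hpos : 0 < Λ * θ ^ 2 := mul_pos hΛpos (pow_pos hθ0 2)
    simp only [sigmaCoeff, if_neg hpos.ne', if_pos hpos]
    calc f (s₀ + t * θ) ≤ _ := hcmp
    _ = _ := by rw [hc]; ring


/-- Forward direction of the one-dimensional comparison: the differential
inequality `f'' + Λ f ≥ 0` on `(0,1)` implies `σ`-concavity of `f`. -/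
theorem stmt_1 (Λ : ℝ) (hΛ : Λ < Real.pi ^ 2)
    (f f' f'' : ℝ → ℝ)
    (hf : ContinuousOn f (Set.Icc 0 1))
    (hf' : ∀ t ∈ Set.Ioo (0 : ℝ) 1, HasDerivAt f (f' t) t)
    (hf'' : ∀ t ∈ Set.Ioo (0 : ℝ) 1, HasDerivAt f' (f'' t) t)
    (hf''cont : ContinuousOn f'' (Set.Ioo 0 1))
    (hfnonneg : ∀ t ∈ Set.Icc (0 : ℝ) 1, 0 ≤ f t)
    (hode : ∀ t ∈ Set.Ioo (0 : ℝ) 1, 0 ≤ f'' t + Λ * f t) :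
    ∀ t ∈ Set.Icc (0 : ℝ) 1, ∀ s₀ ∈ Set.Icc (0 : ℝ) 1, ∀ s₁ ∈ Set.Icc (0 : ℝ) 1,
      f ((1 - t) * s₀ + t * s₁) ≤
        sigmaCoeff Λ (1 - t) |s₀ - s₁| * f s₀ + sigmaCoeff Λ t |s₀ - s₁| * f s₁ := by
  intro t ht s₀ hs₀ s₁ hs₁
  rcases lt_trichotomy s₀ s₁ with h | h | h
  · exact aux_key Λ hΛ f f' f'' hf hf' hf'' hf''cont hode t ht s₀ hs₀ s₁ hs₁ h
  · subst h
    have harg : (1 - t) * s₀ + t * s₀ = s₀ := by ring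
    rw [harg, sub_self, abs_zero]
    have hz : Λ * (0:ℝ) ^ 2 = 0 := by ring
    simp only [sigmaCoeff, if_pos hz]
    have he : (1 - t) * f s₀ + t * f s₀ = f s₀ := by ring
    linarith
  · have hr := aux_key Λ hΛ f f' f'' hf hf' hf'' hf''cont hode (1 - t)
      ⟨by linarith [ht.2], by linarith [ht.1]⟩ s₁ hs₁ s₀ hs₀ h
    have e1 : (1 - (1 - t)) * s₁ + (1 - t) * s₀ = (1 - t) * s₀ + t * s₁ := by ring
    have e2 : (1:ℝ) - (1 - t) = t := by ring
    rw [e1, e2, abs_sub_comm s₁ s₀] at hr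
    linarith
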